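/- Let a ≥ 1 and d ≥ 2 be integers, M be a finite matroid, N be a minor of M, and 𝒳 ⊆ ℛ_a(M) ∩ ℛ_a(N). If ε_M(𝒳) > d^{r(M) - r(N)} · ε_N(𝒳), then there is a subcollection 𝒴 ⊆ 𝒳 such that r_M(𝒴) > a and 𝒴 is d-firm in M. -/

import Mathlib

open Set
open scoped Classical

namespace Matroid

variable {α β : Type*}

/-- The rank of a set `X` in a matroid `M`: the maximum size of an independent subset of `X`
(appropriate for finite matroids). -/
noncomputable def rk (M : Matroid α) (X : Set α) : ℕ :=
  sSup {n | ∃ I, I ⊆ X ∧ M.Indep I ∧ I.ncard = n}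

/-- The rank `r(M)` of a matroid `M`. -/
noncomputable def rank (M : Matroid α) : ℕ := M.rk M.E

/-- The deletion `M \ D` of a set `D` from `M`. -/
def delete' (M : Matroid α) (D : Set α) : Matroid α := M ↾ (M.E \ D)

/-- The contraction `M / C` of a set `C` in `M`, defined via duality. -/
def contract' (M : Matroid α) (C : Set α) : Matroid α := (M✶.delete' C)✶

/-- `N` is a minor of `M`, i.e. `N = M / C \ D` for some sets `C` and `D`. -/
def IsMinor' (N M : Matroid α) : Prop := ∃ C D : Set α, (M.contract' C).delete' D = N

/-- An isomorphism between matroids, possibly on different ground types. -/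
def IsIso (M : Matroid α) (N : Matroid β) : Prop :=
  ∃ e : M.E ≃ N.E, ∀ I : Set M.E, M.Indep ((↑) '' I) ↔ N.Indep ((↑) '' (e '' I))

/-- `N` is isomorphic to the uniform matroid `U_{k,n}`: the ground set has `n` elements and
the independent sets are exactly the subsets with at most `k` elements. -/
def IsUnif (N : Matroid α) (k n : ℕ) : Prop :=
  N.E.Finite ∧ N.E.ncard = n ∧ ∀ I ⊆ N.E, (N.Indep I ↔ I.ncard ≤ k)

/-- `M` has a minor isomorphic to `U_{k,n}`. -/
def HasUnifMinor (M : Matroid α) (k n : ℕ) : Prop :=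
  ∃ N : Matroid α, N.IsMinor' M ∧ N.IsUnif k n

/-- `τ_a(M)`: the minimum size of a collection of subsets of `E(M)`, each of rank at most `a`,
whose union is `E(M)`. -/
noncomputable def tau (M : Matroid α) (a : ℕ) : ℕ :=
  sInf {n | ∃ 𝒞 : Finset (Set α),
    𝒞.card = n ∧ (∀ X ∈ 𝒞, X ⊆ M.E ∧ M.rk X ≤ a) ∧ M.E ⊆ ⋃₀ ↑𝒞}

/-- `M` is `d`-thick: every collection of sets, each of rank less than `r(M)`, whose union
is `E(M)`, has at least `d` members. -/
def Thick (M : Matroid α) (d : ℕ) : Prop :=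
  ∀ 𝒞 : Finset (Set α), (∀ X ∈ 𝒞, X ⊆ M.E ∧ M.rk X < M.rank) → M.E ⊆ ⋃₀ ↑𝒞 → d ≤ 𝒞.card

/-- A set `X` is `d`-thick in `M` if the restriction `M|X` is `d`-thick. -/
def ThickIn (M : Matroid α) (d : ℕ) (X : Set α) : Prop := (M ↾ X).Thick d

/-- A collection of sets is simple in `M` if its members are pairwise dissimilar,
i.e. distinct members have distinct closures. -/
def SimpleColl (M : Matroid α) (𝒳 : Finset (Set α)) : Prop :=
  ∀ X ∈ 𝒳, ∀ Y ∈ 𝒳, M.closure X = M.closure Y → X = Y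

/-- `ε_M(𝒳)`: the maximum size of a subcollection of `𝒳` that is simple in `M`. -/
noncomputable def eps (M : Matroid α) (𝒳 : Finset (Set α)) : ℕ :=
  sSup {n | ∃ 𝒴 : Finset (Set α), 𝒴 ⊆ 𝒳 ∧ M.SimpleColl 𝒴 ∧ 𝒴.card = n}

/-- `𝒳` is `d`-firm in `M`: every subcollection `𝒳'` with `|𝒳'| > |𝒳|/d` has the same rank
as `𝒳`. -/
def Firm (M : Matroid α) (d : ℕ) (𝒳 : Finset (Set α)) : Prop :=
  ∀ 𝒳' ⊆ 𝒳, 𝒳.card < d * 𝒳'.card → M.rk (⋃₀ ↑𝒳') = M.rk (⋃₀ ↑𝒳)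

/-- `ℱ` is a cover of the collection `𝒳` in `M`: every member of `𝒳` is contained in a member
of `ℱ`. -/
def CoverOf (M : Matroid α) (ℱ 𝒳 : Finset (Set α)) : Prop :=
  (∀ F ∈ ℱ, F ⊆ M.E) ∧ ∀ X ∈ 𝒳, ∃ F ∈ ℱ, X ⊆ F

/-- `ℱ` is a cover of the matroid `M`: every element of `E(M)` lies in a member of `ℱ`. -/
def CoverOfGround (M : Matroid α) (ℱ : Finset (Set α)) : Prop :=
  (∀ F ∈ ℱ, F ⊆ M.E) ∧ M.E ⊆ ⋃₀ ↑ℱ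

/-- The weight `wt^d_M(ℱ) = Σ_{F ∈ ℱ} d^{r_M(F)}`. -/
noncomputable def wt (M : Matroid α) (d : ℕ) (ℱ : Finset (Set α)) : ℕ :=
  ∑ F ∈ ℱ, d ^ M.rk F

/-- `ℱ` is a `d`-minimal cover of the collection `𝒳` in `M`. -/
def MinimalCoverOf (M : Matroid α) (d : ℕ) (ℱ 𝒳 : Finset (Set α)) : Prop :=
  M.CoverOf ℱ 𝒳 ∧ ∀ ℱ' : Finset (Set α), M.CoverOf ℱ' 𝒳 → M.wt d ℱ ≤ M.wt d ℱ'

/-- `ℱ` is a `d`-minimal cover of the matroid `M`. -/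
def MinimalCoverOfGround (M : Matroid α) (d : ℕ) (ℱ : Finset (Set α)) : Prop :=
  M.CoverOfGround ℱ ∧ ∀ ℱ' : Finset (Set α), M.CoverOfGround ℱ' → M.wt d ℱ ≤ M.wt d ℱ'

/-- `τ^d(M)`: the minimum weight of a cover of `M`. -/
noncomputable def tauW (M : Matroid α) (d : ℕ) : ℕ :=
  sInf {n | ∃ ℱ : Finset (Set α), M.CoverOfGround ℱ ∧ M.wt d ℱ = n}

/-- `𝒳` is `d`-scattered in `M`: every member of `𝒳` is `d`-thick in `M`, and
`{cl_M(X) : X ∈ 𝒳}` is a `d`-minimal cover of `𝒳` in `M`. -/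
def Scattered (M : Matroid α) (d : ℕ) (𝒳 : Finset (Set α)) : Prop :=
  (∀ X ∈ 𝒳, M.ThickIn d X) ∧ M.MinimalCoverOf d (𝒳.image M.closure) 𝒳

/-- `(M, 𝒮; L)` is an `(a, q, h, d)`-pyramid, where `h = L.length` and `L` lists the
elements `e_1, …, e_h`. -/
def IsPyramid (M : Matroid α) (𝒮 : Finset (Set α)) (L : List α) (a q d : ℕ) : Prop :=
  L.Nodup ∧ M.Indep {x | x ∈ L} ∧
  𝒮.Nonempty ∧
  (∀ S ∈ 𝒮, S ⊆ M.E ∧ M.rk S = a) ∧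
  (∀ S ∈ 𝒮, M.rk (S ∪ {x | x ∈ L}) = M.rk S + M.rk {x | x ∈ L}) ∧
  (∀ i < L.length, ∀ S ∈ 𝒮, ∃ f : Fin q → Set α,
    (∀ j, f j ∈ 𝒮) ∧
    (∀ j k, j ≠ k →
      (M.contract' {x | x ∈ L.take i}).closure (f j) ≠
        (M.contract' {x | x ∈ L.take i}).closure (f k)) ∧
    (∀ j, (M.contract' {x | x ∈ L.take (i+1)}).closure (f j) =
      (M.contract' {x | x ∈ L.take (i+1)}).closure S)) ∧
  (∀ S ∈ 𝒮, M.ThickIn d S)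

/-- `M` is representable over the field `F`. -/
def RepresentableOver (M : Matroid α) (F : Type*) [Field F] : Prop :=
  ∃ (n : ℕ) (φ : α → (Fin n → F)),
    ∀ I ⊆ M.E, (M.Indep I ↔ LinearIndependent F (fun x : I => φ x))

end Matroid

namespace Matroid


section Aux

variable {α : Type*} {M : Matroid α} {X Y Z I J B C R : Set α}

lemma rk_bddAbove (M : Matroid α) [M.Finite] (X : Set α) :
    BddAbove {n | ∃ I, I ⊆ X ∧ M.Indep I ∧ I.ncard = n} := by
  refine ⟨M.E.ncard, ?_⟩
  rintro n ⟨I, _, hI, rfl⟩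
  exact Set.ncard_le_ncard hI.subset_ground M.ground_finite

lemma IsBasis'.rk_eq [M.Finite] (hI : M.IsBasis' I X) : M.rk X = I.ncard := by
  refine IsGreatest.csSup_eq ⟨⟨I, hI.subset, hI.indep, rfl⟩, ?_⟩
  rintro n ⟨J, hJX, hJ, rfl⟩
  obtain ⟨K, hK, hJK⟩ := hJ.subset_isBasis'_of_subset hJX
  have hKI : K.encard = I.encard := hK.encard_eq_encard hI
  have hKfin : K.Finite := M.set_finite K hK.indep.subset_ground
  calc J.ncard ≤ K.ncard := Set.ncard_le_ncard hJK hKfin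
    _ = I.ncard := by rw [Set.ncard_def, hKI, ← Set.ncard_def]

lemma le_rk_of_indep [M.Finite] (hIX : I ⊆ X) (hI : M.Indep I) : I.ncard ≤ M.rk X :=
  le_csSup (M.rk_bddAbove X) ⟨I, hIX, hI, rfl⟩

lemma rk_mono [M.Finite] (h : X ⊆ Y) : M.rk X ≤ M.rk Y := by
  obtain ⟨I, hI⟩ := M.exists_isBasis' X
  rw [hI.rk_eq]
  exact le_rk_of_indep (hI.subset.trans h) hI.indep

lemma rk_closure_eq [M.Finite] (X : Set α) : M.rk (M.closure X) = M.rk X := by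
  obtain ⟨I, hI⟩ := M.exists_isBasis' X
  rw [hI.rk_eq, (hI.isBasis_closure_right.isBasis').rk_eq]

lemma closure_eq_closure_of_rk_le [M.Finite] (hXY : X ⊆ Y) (h : M.rk Y ≤ M.rk X) :
    M.closure X = M.closure Y := by
  obtain ⟨I, hI⟩ := M.exists_isBasis' X
  obtain ⟨J, hJ, hIJ⟩ := hI.indep.subset_isBasis'_of_subset (hI.subset.trans hXY)
  have hfin : J.Finite := M.set_finite J hJ.indep.subset_ground
  have hIJ' : I = J := Set.eq_of_subset_of_ncard_le hIJ
    (by rw [← hI.rk_eq, ← hJ.rk_eq]; exact h) hfin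
  rw [← hI.closure_eq_closure, hIJ', hJ.closure_eq_closure]

lemma rk_le_rank [M.Finite] (X : Set α) : M.rk X ≤ M.rank := by
  obtain ⟨I, hI⟩ := M.exists_isBasis' X
  rw [hI.rk_eq]
  exact le_rk_of_indep hI.indep.subset_ground hI.indep

lemma restrict_rk_eq (M : Matroid α) (hZR : Z ⊆ R) : (M ↾ R).rk Z = M.rk Z := by
  show sSup _ = sSup _
  congr 1
  ext n
  simp only [Set.mem_setOf_eq, restrict_indep_iff]
  exact ⟨fun ⟨I, h1, ⟨h2, _⟩, h3⟩ => ⟨I, h1, h2, h3⟩,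
    fun ⟨I, h1, h2, h3⟩ => ⟨I, h1, ⟨h2, h1.trans hZR⟩, h3⟩⟩

lemma rk_inter_ground_eq (M : Matroid α) (X : Set α) : M.rk (X ∩ M.E) = M.rk X := by
  show sSup _ = sSup _
  congr 1
  ext n
  constructor
  · rintro ⟨I, h1, h2, h3⟩; exact ⟨I, h1.trans inter_subset_left, h2, h3⟩
  · rintro ⟨I, h1, h2, h3⟩; exact ⟨I, subset_inter h1 h2.subset_ground, h2, h3⟩

lemma contract_ground_eq (M : Matroid α) (C : Set α) : (M.contract' C).E = M.E \ C := rfl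

lemma contract'_finite [M.Finite] : (M.contract' C).Finite :=
  ⟨M.ground_finite.subset (diff_subset (s := M.E) (t := C))⟩

lemma contract_base_iff' :
    (M.contract' C).IsBase B ↔
      ∃ B₀, M.IsBase B₀ ∧ M.IsBasis (B₀ ∩ (C ∩ M.E)) (C ∩ M.E) ∧ B = B₀ ∩ (M.E \ C) := by
  have hG : (M.E \ C) ⊆ M✶.E := diff_subset
  have hEC : M.E \ (C ∩ M.E) = M.E \ C := by
    ext x; simp only [mem_diff, mem_inter_iff]; tauto
  constructor
  · intro h
    have hBG : B ⊆ M.E \ C := h.subset_ground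
    have h' : (M✶ ↾ (M.E \ C))✶.IsBase B := h
    have h2 : (M✶ ↾ (M.E \ C)).IsBase ((M.E \ C) \ B) :=
      (dual_isBase_iff (M := M✶ ↾ (M.E \ C)) (B := B) hBG).1 h'
    have h3 : M✶.IsBasis ((M.E \ C) \ B) (M.E \ C) := (isBase_restrict_iff (M := M✶) hG).1 h2
    obtain ⟨B₁, hB₁, hKeq⟩ := h3.exists_isBase
    refine ⟨M.E \ B₁, hB₁.compl_isBase_of_dual, ?_, ?_⟩
    · have hiff := (hB₁.compl_isBase_of_dual).inter_isBasis_iff_compl_inter_isBasis_dual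
        (X := C ∩ M.E) inter_subset_right
      apply hiff.2
      have hB₁E : B₁ ⊆ M.E := hB₁.subset_ground
      have e1 : M.E \ (M.E \ B₁) = B₁ := diff_diff_cancel_left hB₁E
      rw [e1, hEC, ← hKeq]
      exact h3
    · ext x
      constructor
      · intro hx
        have hxG := hBG hx
        refine ⟨⟨hxG.1, fun hxB₁ => ?_⟩, hxG⟩
        have hmem : x ∈ (M.E \ C) \ B := hKeq ▸ (⟨hxB₁, hxG⟩ : x ∈ B₁ ∩ (M.E \ C))
        exact hmem.2 hx
      · rintro ⟨⟨hxE, hxB₁⟩, hxG⟩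
        by_contra hxB
        have hmem : x ∈ B₁ ∩ (M.E \ C) := hKeq ▸ (⟨hxG, hxB⟩ : x ∈ (M.E \ C) \ B)
        exact hxB₁ hmem.1
  · rintro ⟨B₀, hB₀, hbas, rfl⟩
    have hdual := (hB₀.inter_isBasis_iff_compl_inter_isBasis_dual
      (X := C ∩ M.E) inter_subset_right).1 hbas
    rw [hEC] at hdual
    have h2 : (M✶ ↾ (M.E \ C)).IsBase ((M.E \ B₀) ∩ (M.E \ C)) :=
      (isBase_restrict_iff (M := M✶) hG).2 hdual
    have heq : (M.E \ C) \ (B₀ ∩ (M.E \ C)) = (M.E \ B₀) ∩ (M.E \ C) := by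
      ext x; simp only [mem_diff, mem_inter_iff]; tauto
    show (M✶ ↾ (M.E \ C))✶.IsBase (B₀ ∩ (M.E \ C))
    rw [dual_isBase_iff (M := M✶ ↾ (M.E \ C)) (B := B₀ ∩ (M.E \ C))
      (inter_subset_right (s := B₀))]
    show (M✶ ↾ (M.E \ C)).IsBase ((M.E \ C) \ (B₀ ∩ (M.E \ C)))
    rw [heq]
    exact h2

lemma contract_indep_of (hJ : M.IsBasis J (C ∩ M.E)) (hIG : I ⊆ M.E \ C)
    (hI : M.Indep (I ∪ J)) : (M.contract' C).Indep I := by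
  have hJC : J ⊆ C ∩ M.E := hJ.subset
  have hsub : I ∪ J ⊆ I ∪ (C ∩ M.E) := union_subset_union_right _ hJC
  obtain ⟨K, hK, hIJK⟩ := hI.subset_isBasis'_of_subset hsub
  have hKE : K ⊆ (I ∪ (C ∩ M.E)) ∩ M.E := hK.isBasis_inter_ground.subset
  have hIC : ∀ x ∈ I, x ∉ C := fun x hx => (hIG hx).2
  have hKC : K ∩ (C ∩ M.E) = J :=
    (hJ.eq_of_subset_indep (hK.indep.inter_right _)
      (subset_inter (subset_union_right.trans hIJK) hJC) inter_subset_right).symm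
  have hKeq : K = I ∪ J := by
    refine subset_antisymm (fun x hxK => ?_) hIJK
    obtain ⟨hx1, hx2⟩ := hKE hxK
    rcases hx1 with hxI | hxC
    · exact Or.inl hxI
    · exact Or.inr (hKC ▸ (⟨hxK, hxC⟩ : x ∈ K ∩ (C ∩ M.E)))
  have hbas : M.IsBasis (I ∪ J) ((I ∪ (C ∩ M.E)) ∩ M.E) := by
    rw [← hKeq]; exact hK.isBasis_inter_ground
  obtain ⟨B₀, hB₀, hBeq⟩ := hbas.exists_isBase
  have hCsub : C ∩ M.E ⊆ (I ∪ (C ∩ M.E)) ∩ M.E :=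
    subset_inter subset_union_right inter_subset_right
  have hB₀C : B₀ ∩ (C ∩ M.E) = J := by
    ext x
    constructor
    · rintro ⟨hxB, hxC⟩
      have hx : x ∈ I ∪ J := by rw [hBeq]; exact ⟨hxB, hCsub hxC⟩
      rcases hx with h | h
      · exact absurd hxC.1 (hIC x h)
      · exact h
    · intro hxJ
      have hxIJ : x ∈ I ∪ J := Or.inr hxJ
      rw [hBeq] at hxIJ
      exact ⟨hxIJ.1, hJC hxJ⟩
  have hbase : (M.contract' C).IsBase (B₀ ∩ (M.E \ C)) :=
    contract_base_iff'.2 ⟨B₀, hB₀, by rw [hB₀C]; exact hJ, rfl⟩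
  refine hbase.indep.subset (subset_inter (fun x hx => ?_) hIG)
  have hx' : x ∈ I ∪ J := Or.inl hx
  rw [hBeq] at hx'
  exact hx'.1

lemma exists_of_contract_indep (h : (M.contract' C).Indep I) :
    I ⊆ M.E \ C ∧ ∃ J, M.IsBasis J (C ∩ M.E) ∧ M.Indep (I ∪ J) ∧ Disjoint I J := by
  obtain ⟨B, hB, hIB⟩ := h.exists_isBase_superset
  obtain ⟨B₀, hB₀, hbas, rfl⟩ := contract_base_iff'.1 hB
  have hIG : I ⊆ M.E \ C := hIB.trans inter_subset_right
  refine ⟨hIG, B₀ ∩ (C ∩ M.E), hbas,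
    hB₀.indep.subset (union_subset (hIB.trans inter_subset_left) inter_subset_left), ?_⟩
  exact Set.disjoint_left.2 fun x hxI hxJ => (hIG hxI).2 hxJ.2.1

lemma rk_le_contract_rk_add [M.Finite] (C : Set α) (hZ : Z ⊆ M.E \ C) :
    M.rk Z ≤ (M.contract' C).rk Z + M.rk C := by
  haveI : (M.contract' C).Finite := contract'_finite
  obtain ⟨J, hJ⟩ := M.exists_isBasis (C ∩ M.E) inter_subset_right
  obtain ⟨K, hK, hJK⟩ := hJ.indep.subset_isBasis'_of_subset
    (hJ.subset.trans subset_union_right : J ⊆ Z ∪ (C ∩ M.E))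
  have hKfin : K.Finite := M.set_finite K hK.indep.subset_ground
  have hKC : K ∩ (C ∩ M.E) = J :=
    (hJ.eq_of_subset_indep (hK.indep.inter_right _) (subset_inter hJK hJ.subset)
      inter_subset_right).symm
  have hKJZ : K \ J ⊆ Z := by
    intro x hx
    rcases hK.subset hx.1 with h | h
    · exact h
    · exact absurd (hKC ▸ (⟨hx.1, h⟩ : x ∈ K ∩ (C ∩ M.E))) hx.2
  have hind : (M.contract' C).Indep (K \ J) :=
    contract_indep_of hJ (fun x hx => hZ (hKJZ hx))
      (by rw [diff_union_of_subset hJK]; exact hK.indep)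
  have h1 : (K \ J).ncard ≤ (M.contract' C).rk Z := le_rk_of_indep hKJZ hind
  have h2 : M.rk Z ≤ K.ncard := by rw [← hK.rk_eq]; exact rk_mono subset_union_left
  have h3 : M.rk C = J.ncard := by rw [← M.rk_inter_ground_eq C]; exact hJ.isBasis'.rk_eq
  have h4 : (K \ J).ncard + J.ncard = K.ncard := Set.ncard_diff_add_ncard_of_subset hJK hKfin
  omega

lemma contract_rank_add_le [M.Finite] (C : Set α) :
    (M.contract' C).rank + M.rk C ≤ M.rank := by
  haveI : (M.contract' C).Finite := contract'_finite
  obtain ⟨I, hI⟩ := (M.contract' C).exists_isBasis' (M.E \ C)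
  obtain ⟨hIG, J, hJ, hind, hdisj⟩ := exists_of_contract_indep hI.indep
  have h1 : (M.contract' C).rank = I.ncard := hI.rk_eq
  have h2 : M.rk C = J.ncard := by rw [← M.rk_inter_ground_eq C]; exact hJ.isBasis'.rk_eq
  have h3 : (I ∪ J).ncard ≤ M.rank := le_rk_of_indep hind.subset_ground hind
  have h4 : (I ∪ J).ncard = I.ncard + J.ncard :=
    Set.ncard_union_eq hdisj (M.set_finite I (hIG.trans diff_subset))
      (M.set_finite J hJ.indep.subset_ground)
  omega

lemma eps_bddAbove (M : Matroid α) (𝒳 : Finset (Set α)) :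
    BddAbove {n | ∃ 𝒴 : Finset (Set α), 𝒴 ⊆ 𝒳 ∧ M.SimpleColl 𝒴 ∧ 𝒴.card = n} := by
  refine ⟨𝒳.card, ?_⟩
  rintro n ⟨𝒴, h1, _, rfl⟩
  exact Finset.card_le_card h1

lemma exists_simple_eps (M : Matroid α) (𝒳 : Finset (Set α)) :
    ∃ 𝒴, 𝒴 ⊆ 𝒳 ∧ M.SimpleColl 𝒴 ∧ 𝒴.card = M.eps 𝒳 := by
  have h : M.eps 𝒳 ∈ {n | ∃ 𝒴 : Finset (Set α), 𝒴 ⊆ 𝒳 ∧ M.SimpleColl 𝒴 ∧ 𝒴.card = n} := by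
    apply Nat.sSup_mem
    · exact ⟨0, ∅, Finset.empty_subset _, fun X hX => absurd hX (Finset.notMem_empty X), rfl⟩
    · exact eps_bddAbove M 𝒳
  exact h

lemma card_le_eps (M : Matroid α) {𝒳 𝒴 : Finset (Set α)} (h : 𝒴 ⊆ 𝒳)
    (hs : M.SimpleColl 𝒴) : 𝒴.card ≤ M.eps 𝒳 :=
  le_csSup (eps_bddAbove M 𝒳) ⟨𝒴, h, hs, rfl⟩

lemma lt_rk_union_of_closure_ne [M.Finite] {a : ℕ} (hrX : M.rk X = a) (hrY : M.rk Y = a)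
    (hne : M.closure X ≠ M.closure Y) : a < M.rk (X ∪ Y) := by
  by_contra hle
  push_neg at hle
  have h1 : M.closure X = M.closure (X ∪ Y) :=
    closure_eq_closure_of_rk_le subset_union_left (by omega)
  have h2 : M.closure Y = M.closure (X ∪ Y) :=
    closure_eq_closure_of_rk_le subset_union_right (by omega)
  exact hne (h1.trans h2.symm)

lemma exists_firm [M.Finite] {a d : ℕ} (hd : 2 ≤ d) :
    ∀ (n : ℕ) (𝒵 : Finset (Set α)), 𝒵.card ≤ n →
      (∀ X ∈ 𝒵, M.rk X = a) → M.SimpleColl 𝒵 →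
      d ^ (M.rk (⋃₀ ↑𝒵) - a) < 𝒵.card →
      ∃ 𝒴 ⊆ 𝒵, a < M.rk (⋃₀ ↑𝒴) ∧ M.Firm d 𝒴 := by
  intro n
  induction n with
  | zero => intro 𝒵 hn _ _ hcard; omega
  | succ n IH =>
    intro 𝒵 hn hmem hsimp hcard
    have hone : 1 ≤ d ^ (M.rk (⋃₀ ↑𝒵) - a) := Nat.one_le_pow _ _ (by omega)
    have h2card : 1 < 𝒵.card := by omega
    obtain ⟨X, hX, Y, hY, hXY⟩ := Finset.one_lt_card.mp h2card
    have hclne : M.closure X ≠ M.closure Y := fun h => hXY (hsimp X hX Y hY h)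
    have haXY : a < M.rk (X ∪ Y) := lt_rk_union_of_closure_ne (hmem X hX) (hmem Y hY) hclne
    have hXYsub : X ∪ Y ⊆ ⋃₀ ↑𝒵 :=
      union_subset (subset_sUnion_of_mem (Finset.mem_coe.mpr hX))
        (subset_sUnion_of_mem (Finset.mem_coe.mpr hY))
    have har : a < M.rk (⋃₀ ↑𝒵) := lt_of_lt_of_le haXY (rk_mono hXYsub)
    by_cases hF : M.Firm d 𝒵
    · exact ⟨𝒵, Finset.Subset.refl _, har, hF⟩
    · simp only [Firm] at hF
      push_neg at hF
      obtain ⟨𝒵', h𝒵'sub, hcard', hrne⟩ := hF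
      have hrle : M.rk (⋃₀ ↑𝒵') ≤ M.rk (⋃₀ ↑𝒵) :=
        rk_mono (sUnion_subset_sUnion (Finset.coe_subset.mpr h𝒵'sub))
      have hss : 𝒵' ⊂ 𝒵 :=
        ssubset_of_subset_of_ne h𝒵'sub (fun h => hrne (by rw [h]))
      have hcard𝒵' : 𝒵'.card < 𝒵.card := Finset.card_lt_card hss
      have hd1 : d ^ (M.rk (⋃₀ ↑𝒵) - a - 1) < 𝒵'.card := by
        have he : M.rk (⋃₀ ↑𝒵) - a - 1 + 1 = M.rk (⋃₀ ↑𝒵) - a := by omega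
        have hlt : d * d ^ (M.rk (⋃₀ ↑𝒵) - a - 1) < d * 𝒵'.card := by
          rw [mul_comm d, ← pow_succ, he]
          omega
        exact Nat.lt_of_mul_lt_mul_left hlt
      have hmono : d ^ (M.rk (⋃₀ ↑𝒵') - a) ≤ d ^ (M.rk (⋃₀ ↑𝒵) - a - 1) :=
        Nat.pow_le_pow_right (by omega) (by omega)
      obtain ⟨𝒴, h1, h2, h3⟩ := IH 𝒵' (by omega) (fun X hX => hmem X (h𝒵'sub hX))
        (fun X hX Y hY h => hsimp X (h𝒵'sub hX) Y (h𝒵'sub hY) h)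
        (lt_of_le_of_lt hmono hd1)
      exact ⟨𝒴, h1.trans h𝒵'sub, h2, h3⟩

end Aux

/-- If `a ≥ 1`, `d ≥ 2`, `N` is a minor of the finite matroid `M`, and
`𝒳 ⊆ ℛ_a(M) ∩ ℛ_a(N)` satisfies `ε_M(𝒳) > d^{r(M)-r(N)} · ε_N(𝒳)`, then some `𝒴 ⊆ 𝒳`
satisfies `r_M(𝒴) > a` and is `d`-firm in `M`. -/
theorem statement8 {α : Type*} (a d : ℕ) (ha : 1 ≤ a) (hd : 2 ≤ d)
    (M N : Matroid α) (hM : M.Finite) (hN : N.IsMinor' M) (𝒳 : Finset (Set α))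
    (h𝒳M : ∀ X ∈ 𝒳, X ⊆ M.E ∧ M.rk X = a)
    (h𝒳N : ∀ X ∈ 𝒳, X ⊆ N.E ∧ N.rk X = a)
    (heps : d ^ (M.rank - N.rank) * N.eps 𝒳 < M.eps 𝒳) :
    ∃ 𝒴 ⊆ 𝒳, a < M.rk (⋃₀ ↑𝒴) ∧ M.Firm d 𝒴 := by
  haveI := hM
  obtain ⟨C, D, rfl⟩ := hN
  haveI hMCfin : (M.contract' C).Finite := contract'_finite
  haveI hNfin : ((M.contract' C).delete' D).Finite :=
    ⟨M.ground_finite.subset (fun x hx => hx.1.1)⟩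
  have hrkN : ∀ Z, Z ⊆ ((M.contract' C).delete' D).E → ((M.contract' C).delete' D).rk Z = (M.contract' C).rk Z := by
    intro Z hZ
    exact restrict_rk_eq (M.contract' C) hZ
  set k := M.rank - ((M.contract' C).delete' D).rank with hk
  have hrankN : ((M.contract' C).delete' D).rank ≤ (M.contract' C).rank := by
    have h1 : ((M.contract' C).delete' D).rank = (M.contract' C).rk ((M.E \ C) \ D) := hrkN _ (subset_refl _)
    rw [h1]
    exact rk_mono diff_subset
  have hrkC : M.rk C ≤ k := by
    have h1 := contract_rank_add_le (M := M) C
    omega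
  have hbound : ∀ Z, Z ⊆ ((M.contract' C).delete' D).E → M.rk Z ≤ ((M.contract' C).delete' D).rk Z + k := by
    intro Z hZ
    have h1 : M.rk Z ≤ (M.contract' C).rk Z + M.rk C :=
      rk_le_contract_rk_add C (hZ.trans (fun x hx => hx.1))
    rw [hrkN Z hZ]
    omega
  obtain ⟨𝒴₀, h𝒴₀, hsM, hcard𝒴₀⟩ := exists_simple_eps M 𝒳
  set f : Set α → Set α := fun X => ((M.contract' C).delete' D).closure X with hf
  set t := 𝒴₀.image f with ht
  have htle : t.card ≤ ((M.contract' C).delete' D).eps 𝒳 := by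
    set g : Set α → Set α := fun c => if h : ∃ X ∈ 𝒴₀, f X = c then h.choose else ∅ with hg
    have hgspec : ∀ c ∈ t, g c ∈ 𝒴₀ ∧ f (g c) = c := by
      intro c hc
      rw [ht, Finset.mem_image] at hc
      obtain ⟨X, hX, hfX⟩ := hc
      have hex : ∃ X ∈ 𝒴₀, f X = c := ⟨X, hX, hfX⟩
      rw [hg]
      simp only [dif_pos hex]
      exact ⟨hex.choose_spec.1, hex.choose_spec.2⟩
    set 𝒵 := t.image g with h𝒵
    have hginj : Set.InjOn g ↑t := by
      intro c1 h1 c2 h2 heq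
      rw [← (hgspec c1 h1).2, ← (hgspec c2 h2).2, heq]
    have hcard𝒵 : 𝒵.card = t.card := Finset.card_image_of_injOn hginj
    have h𝒵sub : 𝒵 ⊆ 𝒳 := by
      intro X hX
      rw [h𝒵, Finset.mem_image] at hX
      obtain ⟨c, hc, rfl⟩ := hX
      exact h𝒴₀ (hgspec c hc).1
    have h𝒵simp : ((M.contract' C).delete' D).SimpleColl 𝒵 := by
      intro X hX Y hY hcl
      rw [h𝒵, Finset.mem_image] at hX hY
      obtain ⟨c1, hc1, rfl⟩ := hX
      obtain ⟨c2, hc2, rfl⟩ := hY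
      have e1 : f (g c1) = c1 := (hgspec c1 hc1).2
      have e2 : f (g c2) = c2 := (hgspec c2 hc2).2
      have hcc : c1 = c2 := by rw [← e1, ← e2]; exact hcl
      rw [hcc]
    calc t.card = 𝒵.card := hcard𝒵.symm
      _ ≤ _ := card_le_eps _ h𝒵sub h𝒵simp
  have hmaps : ∀ X ∈ 𝒴₀, f X ∈ t := fun X hX => Finset.mem_image_of_mem f hX
  have hlt : t.card * d ^ k < 𝒴₀.card := by
    calc t.card * d ^ k ≤ ((M.contract' C).delete' D).eps 𝒳 * d ^ k := Nat.mul_le_mul_right _ htle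
      _ = d ^ k * ((M.contract' C).delete' D).eps 𝒳 := mul_comm _ _
      _ < M.eps 𝒳 := heps
      _ = 𝒴₀.card := hcard𝒴₀.symm
  obtain ⟨c, hc, hfib⟩ := Finset.exists_lt_card_fiber_of_mul_lt_card_of_maps_to hmaps hlt
  set 𝒴f := 𝒴₀.filter (fun X => f X = c) with h𝒴f
  have h𝒴fsub : 𝒴f ⊆ 𝒴₀ := Finset.filter_subset _ _
  have hpos : 0 < 𝒴f.card := by
    have h1 := Nat.one_le_pow k d (by omega)
    omega
  obtain ⟨X₀, hX₀⟩ := Finset.card_pos.mp hpos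
  have hX₀X : X₀ ∈ 𝒳 := h𝒴₀ (h𝒴fsub hX₀)
  have hrk𝒴f : M.rk (⋃₀ ↑𝒴f) ≤ a + k := by
    have hsub : ⋃₀ ↑𝒴f ⊆ ((M.contract' C).delete' D).closure X₀ := by
      intro x hx
      obtain ⟨X, hX, hxX⟩ := hx
      have hXf : X ∈ 𝒴f := Finset.mem_coe.mp hX
      have hXcl : f X = c := (Finset.mem_filter.mp hXf).2
      have hX₀cl : f X₀ = c := (Finset.mem_filter.mp hX₀).2
      have hXN : X ⊆ ((M.contract' C).delete' D).E := (h𝒳N X (h𝒴₀ (h𝒴fsub hXf))).1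
      have hxcl : x ∈ f X := ((M.contract' C).delete' D).subset_closure X hXN hxX
      rw [hXcl, ← hX₀cl] at hxcl
      exact hxcl
    have h1 : M.rk (⋃₀ ↑𝒴f) ≤ ((M.contract' C).delete' D).rk (⋃₀ ↑𝒴f) + k :=
      hbound _ (hsub.trans (((M.contract' C).delete' D).closure_subset_ground X₀))
    have h2 : ((M.contract' C).delete' D).rk (⋃₀ ↑𝒴f) ≤ ((M.contract' C).delete' D).rk (((M.contract' C).delete' D).closure X₀) :=
      rk_mono hsub
    have h3 : ((M.contract' C).delete' D).rk (((M.contract' C).delete' D).closure X₀) = a := by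
      rw [rk_closure_eq]
      exact (h𝒳N X₀ hX₀X).2
    omega
  have hpowle : d ^ (M.rk (⋃₀ ↑𝒴f) - a) ≤ d ^ k :=
    Nat.pow_le_pow_right (by omega) (by omega)
  obtain ⟨𝒴, h1, h2, h3⟩ := exists_firm hd 𝒴f.card 𝒴f le_rfl
    (fun X hX => (h𝒳M X (h𝒴₀ (h𝒴fsub hX))).2)
    (fun X hX Y hY h => hsM X (h𝒴fsub hX) Y (h𝒴fsub hY) h)
    (lt_of_le_of_lt hpowle hfib)
  exact ⟨𝒴, h1.trans (h𝒴fsub.trans h𝒴₀), h2, h3⟩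


end Matroid
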